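/- Let C be a triangulated category admitting countable products, let (Y_i)_{i≥0} be objects of C with morphisms φ_i : Y_i → Y_{i−1}, and let Y = holim Y_i be their homotopy limit. If A is a cocompact object of C, then the natural map colim_i Hom(Y_i, A) → Hom(Y, A) is bijective. -/

import Mathlib

open CategoryTheory CategoryTheory.Limits CategoryTheory.Pretriangulated CategoryTheory.Category
open scoped DirectSum

universe v u

/-- An object `A` of a preadditive category is cocompact if for every set-indexed family
`Z` whose product exists, the natural map `⊕ᵢ Hom(Zᵢ, A) → Hom(∏ᵢ Zᵢ, A)` is bijective. -/
def Cocompact {C : Type u} [Category.{v} C] [Preadditive C] (A : C) : Prop :=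
  ∀ (I : Type v) [DecidableEq I] (Z : I → C) [HasProduct Z],
    Function.Bijective
      (DirectSum.toAddMonoid (fun i : I =>
        AddMonoidHom.mk' (fun u : Z i ⟶ A => Limits.Pi.π Z i ≫ u)
          (fun _ _ => by simp [Preadditive.comp_add])) :
        (⨁ i : I, (Z i ⟶ A)) →+ ((∏ᶜ Z) ⟶ A))

section Aux

variable {C : Type u} [Category.{v} C] [Preadditive C]

/-- The natural map `⨁ Hom(Z i, A) → Hom(∏ Z, A)`. -/
noncomputable def PhiHom (Z : ℕ → C) [HasProduct Z] (A : C) :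
    (⨁ i : ℕ, (Z i ⟶ A)) →+ ((∏ᶜ Z) ⟶ A) :=
  DirectSum.toAddMonoid (fun i : ℕ =>
    AddMonoidHom.mk' (fun u : Z i ⟶ A => Limits.Pi.π Z i ≫ u)
      (fun _ _ => by simp [Preadditive.comp_add]))

lemma PhiHom_of (Z : ℕ → C) [HasProduct Z] (A : C) (i : ℕ) (u : Z i ⟶ A) :
    PhiHom Z A (DirectSum.of (fun j : ℕ => (Z j ⟶ A)) i u) = Limits.Pi.π Z i ≫ u := by
  simp [PhiHom]

/-- The map `1 - shift` on the direct sum. -/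
noncomputable def Dshift (Z : ℕ → C) (ψ : ∀ i : ℕ, Z (i + 1) ⟶ Z i) (A : C) :
    (⨁ i : ℕ, (Z i ⟶ A)) →+ (⨁ i : ℕ, (Z i ⟶ A)) :=
  DirectSum.toAddMonoid (fun i : ℕ =>
    AddMonoidHom.mk' (fun u : Z i ⟶ A =>
        DirectSum.of (fun j : ℕ => (Z j ⟶ A)) i u
          - DirectSum.of (fun j : ℕ => (Z j ⟶ A)) (i + 1) (ψ i ≫ u))
      (fun u v => by
        simp only [Preadditive.comp_add, map_add]
        abel))

lemma Dshift_of (Z : ℕ → C) (ψ : ∀ i : ℕ, Z (i + 1) ⟶ Z i) (A : C) (i : ℕ) (u : Z i ⟶ A) :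
    Dshift Z ψ A (DirectSum.of (fun j : ℕ => (Z j ⟶ A)) i u)
      = DirectSum.of (fun j : ℕ => (Z j ⟶ A)) i u
          - DirectSum.of (fun j : ℕ => (Z j ⟶ A)) (i + 1) (ψ i ≫ u) := by
  simp [Dshift]

lemma Dshift_apply_zero (Z : ℕ → C) (ψ : ∀ i : ℕ, Z (i + 1) ⟶ Z i) (A : C)
    (x : ⨁ i : ℕ, (Z i ⟶ A)) : (Dshift Z ψ A x) 0 = x 0 := by
  induction x using DirectSum.induction_on with
  | zero => simp
  | of i u =>
    rw [Dshift_of, DirectSum.sub_apply, DirectSum.of_eq_of_ne _ _ _ (Nat.succ_ne_zero i).symm,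
      sub_zero]
  | add x y hx hy =>
    rw [map_add, DirectSum.add_apply, DirectSum.add_apply, hx, hy]

lemma Dshift_apply_succ (Z : ℕ → C) (ψ : ∀ i : ℕ, Z (i + 1) ⟶ Z i) (A : C)
    (x : ⨁ i : ℕ, (Z i ⟶ A)) (j : ℕ) :
    (Dshift Z ψ A x) (j + 1) = x (j + 1) - ψ j ≫ x j := by
  induction x using DirectSum.induction_on with
  | zero => simp
  | of i u =>
    rw [Dshift_of, DirectSum.sub_apply]
    by_cases h : i = j
    · subst h
      rw [DirectSum.of_eq_same, DirectSum.of_eq_same]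
    · rw [DirectSum.of_eq_of_ne _ _ _ (fun hh => h (Nat.succ_injective hh).symm),
        DirectSum.of_eq_of_ne _ _ _ (Ne.symm h), comp_zero]
  | add x y hx hy =>
    rw [map_add, DirectSum.add_apply, DirectSum.add_apply, DirectSum.add_apply, hx, hy,
      Preadditive.comp_add]
    abel

lemma Phi_Dshift (Z : ℕ → C) [HasProduct Z] (ψ : ∀ i : ℕ, Z (i + 1) ⟶ Z i) (A : C)
    (x : ⨁ i : ℕ, (Z i ⟶ A)) :
    PhiHom Z A (Dshift Z ψ A x)
      = Limits.Pi.lift (fun i : ℕ => Limits.Pi.π Z i - Limits.Pi.π Z (i + 1) ≫ ψ i)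
          ≫ PhiHom Z A x := by
  induction x using DirectSum.induction_on with
  | zero => simp
  | of i u =>
    simp only [Dshift_of, map_sub, PhiHom_of, ← assoc, limit.lift_π]
    simp [Preadditive.sub_comp]
  | add x y hx hy =>
    rw [map_add, map_add, map_add, hx, hy, Preadditive.comp_add]

lemma Dshift_eq_zero (Z : ℕ → C) (ψ : ∀ i : ℕ, Z (i + 1) ⟶ Z i) (A : C)
    (x : ⨁ i : ℕ, (Z i ⟶ A)) (hx : Dshift Z ψ A x = 0) : x = 0 := by
  have key : ∀ j : ℕ, x j = 0 := by
    intro j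
    induction j with
    | zero =>
      have h0 := Dshift_apply_zero Z ψ A x
      rw [hx, DirectSum.zero_apply] at h0
      exact h0.symm
    | succ j ih =>
      have h0 := Dshift_apply_succ Z ψ A x j
      rw [hx, DirectSum.zero_apply] at h0
      have := (sub_eq_zero.mp h0.symm)
      rw [this, ih, comp_zero]
  exact DFinsupp.ext key

lemma exists_bound {A : C} (Z : ℕ → C) (x : ⨁ i : ℕ, (Z i ⟶ A)) :
    ∃ N : ℕ, ∀ j, N ≤ j → x j = 0 := by
  induction x using DirectSum.induction_on with
  | zero => exact ⟨0, fun j _ => by simp⟩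
  | of i u =>
    exact ⟨i + 1, fun j hj => DirectSum.of_eq_of_ne _ _ _ (by omega)⟩
  | add x y hx hy =>
    obtain ⟨N₁, h₁⟩ := hx
    obtain ⟨N₂, h₂⟩ := hy
    exact ⟨max N₁ N₂, fun j hj => by
      rw [DirectSum.add_apply, h₁ j (le_trans (le_max_left _ _) hj),
        h₂ j (le_trans (le_max_right _ _) hj), add_zero]⟩

/-- Cocompactness gives bijectivity of `PhiHom` for `ℕ`-indexed families. -/
lemma cocompact_bij_nat {A : C} (hA : Cocompact A) (Z : ℕ → C) [HasProduct Z] :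
    Function.Bijective (PhiHom Z A) := by
  classical
  haveI : DecidableEq (ULift.{v} ℕ) := Equiv.decidableEq Equiv.ulift
  haveI hp : HasProduct (fun k : ULift.{v} ℕ => Z k.down) := by
    haveI := Limits.hasLimit_equivalence_comp (F := Discrete.functor Z)
      (Discrete.equivalence (Equiv.ulift : ULift.{v} ℕ ≃ ℕ))
    exact hasLimit_of_iso
      (F := (Discrete.equivalence (Equiv.ulift : ULift.{v} ℕ ≃ ℕ)).functor ⋙ Discrete.functor Z)
      (Discrete.natIso fun j => Iso.refl _)
  have hbij := hA (ULift.{v} ℕ) (fun k : ULift.{v} ℕ => Z k.down)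
  set Φ' := (DirectSum.toAddMonoid (fun i : ULift.{v} ℕ =>
        AddMonoidHom.mk' (fun u : Z i.down ⟶ A =>
          Limits.Pi.π (fun k : ULift.{v} ℕ => Z k.down) i ≫ u)
          (fun _ _ => by simp [Preadditive.comp_add])) :
      (⨁ i : ULift.{v} ℕ, (Z i.down ⟶ A))
        →+ ((∏ᶜ (fun k : ULift.{v} ℕ => Z k.down)) ⟶ A)) with hΦ'
  have hΦ'of : ∀ (k : ULift.{v} ℕ) (u : Z k.down ⟶ A),
      Φ' (DirectSum.of (fun j : ULift.{v} ℕ => (Z j.down ⟶ A)) k u)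
        = Limits.Pi.π (fun k : ULift.{v} ℕ => Z k.down) k ≫ u := by
    intro k u
    rw [hΦ', DirectSum.toAddMonoid_of]
    rfl
  set E : (⨁ i : ℕ, (Z i ⟶ A)) →+ (⨁ i : ULift.{v} ℕ, (Z i.down ⟶ A)) :=
    DirectSum.toAddMonoid (fun i : ℕ =>
      DirectSum.of (fun j : ULift.{v} ℕ => (Z j.down ⟶ A)) (ULift.up i)) with hE
  set E' : (⨁ i : ULift.{v} ℕ, (Z i.down ⟶ A)) →+ (⨁ i : ℕ, (Z i ⟶ A)) :=
    DirectSum.toAddMonoid (fun k : ULift.{v} ℕ =>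
      DirectSum.of (fun j : ℕ => (Z j ⟶ A)) k.down) with hE'
  have hEof : ∀ (i : ℕ) (u : Z i ⟶ A),
      E (DirectSum.of (fun j : ℕ => (Z j ⟶ A)) i u)
        = DirectSum.of (fun j : ULift.{v} ℕ => (Z j.down ⟶ A)) (ULift.up i) u := by
    intro i u; rw [hE, DirectSum.toAddMonoid_of]
  have hE'of : ∀ (k : ULift.{v} ℕ) (u : Z k.down ⟶ A),
      E' (DirectSum.of (fun j : ULift.{v} ℕ => (Z j.down ⟶ A)) k u)
        = DirectSum.of (fun j : ℕ => (Z j ⟶ A)) k.down u := by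
    intro k u; rw [hE', DirectSum.toAddMonoid_of]
  have hEE' : ∀ x, E' (E x) = x := by
    intro x
    induction x using DirectSum.induction_on with
    | zero => simp
    | of i u => rw [hEof, hE'of]
    | add x y hx hy => rw [map_add, map_add, hx, hy]
  -- the reindexing isomorphism between the two products
  set r1 : (∏ᶜ Z : C) ⟶ ∏ᶜ (fun k : ULift.{v} ℕ => Z k.down) :=
    Limits.Pi.lift (fun k : ULift.{v} ℕ => Limits.Pi.π Z k.down) with hr1
  set r2 : (∏ᶜ (fun k : ULift.{v} ℕ => Z k.down) : C) ⟶ ∏ᶜ Z :=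
    Limits.Pi.lift (fun i : ℕ =>
      Limits.Pi.π (fun k : ULift.{v} ℕ => Z k.down) (ULift.up i)) with hr2
  have hr12 : r1 ≫ r2 = 𝟙 _ := by
    apply limit.hom_ext
    rintro ⟨i⟩
    rw [assoc, id_comp]
    erw [limit.lift_π, limit.lift_π]
    rfl
  have hr21 : r2 ≫ r1 = 𝟙 _ := by
    apply limit.hom_ext
    rintro ⟨⟨k⟩⟩
    rw [assoc, id_comp]
    erw [limit.lift_π, limit.lift_π]
    rfl
  have comm : ∀ x, Φ' (E x) = r2 ≫ PhiHom Z A x := by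
    intro x
    induction x using DirectSum.induction_on with
    | zero => simp
    | of i u =>
      rw [hEof, hΦ'of, PhiHom_of, ← assoc, hr2]
      erw [limit.lift_π]
      rfl
    | add x y hx hy =>
      rw [map_add, map_add, map_add, hx, hy, Preadditive.comp_add]
  constructor
  · intro x₁ x₂ hx
    have h1 : Φ' (E x₁) = Φ' (E x₂) := by rw [comm, comm, hx]
    have h2 := hbij.1 h1
    calc x₁ = E' (E x₁) := (hEE' x₁).symm
      _ = E' (E x₂) := by rw [h2]
      _ = x₂ := hEE' x₂
  · intro w
    obtain ⟨x', hx'⟩ := hbij.2 (r2 ≫ w)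
    -- every element of the ULift direct sum is in the range of E
    have hrange : ∀ x' : ⨁ i : ULift.{v} ℕ, (Z i.down ⟶ A), ∃ x, E x = x' := by
      intro x'
      induction x' using DirectSum.induction_on with
      | zero => exact ⟨0, map_zero _⟩
      | of k u =>
        cases k with
        | up k => exact ⟨DirectSum.of (fun j : ℕ => (Z j ⟶ A)) k u, hEof k u⟩
      | add x y hx hy =>
        obtain ⟨a, ha⟩ := hx
        obtain ⟨b, hb⟩ := hy
        exact ⟨a + b, by rw [map_add, ha, hb]⟩
    obtain ⟨x, rfl⟩ := hrange x'
    refine ⟨x, ?_⟩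
    have h3 := comm x
    rw [hx'] at h3
    have h4 := congrArg (fun t => r1 ≫ t) h3
    rw [← assoc, ← assoc, hr12, id_comp, id_comp] at h4
    exact h4.symm

/-- Injectivity of precomposition with the `1 - shift` map on the product. -/
lemma dMap_precomp_eq_zero {A : C} (hA : Cocompact A) (Z : ℕ → C) [HasProduct Z]
    (ψ : ∀ i : ℕ, Z (i + 1) ⟶ Z i) (w : (∏ᶜ Z) ⟶ A)
    (hw : Limits.Pi.lift (fun i : ℕ => Limits.Pi.π Z i - Limits.Pi.π Z (i + 1) ≫ ψ i) ≫ w = 0) :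
    w = 0 := by
  obtain ⟨x, rfl⟩ := (cocompact_bij_nat hA Z).2 w
  rw [← Phi_Dshift] at hw
  have h0 : Dshift Z ψ A x = 0 := (cocompact_bij_nat hA Z).1 (by rw [hw, map_zero])
  rw [Dshift_eq_zero Z ψ A x h0, map_zero]

end Aux

variable {C : Type u} [Category.{v} C] [Preadditive C] [HasZeroObject C]
  [HasShift C ℤ] [∀ n : ℤ, (shiftFunctor C n).Additive] [Pretriangulated C]

/-- The transition morphisms `Y (i+k) ⟶ Y i` of a tower. -/
def towerTransition (Y : ℕ → C) (φ : ∀ i : ℕ, Y (i + 1) ⟶ Y i) :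
    ∀ (i k : ℕ), Y (i + k) ⟶ Y i
  | _, 0 => 𝟙 _
  | i, (k + 1) => φ (i + k) ≫ towerTransition Y φ i k

/-- Lemma 2.2.3(3): if `A` is cocompact, then for any homotopy limit `L` of a sequence
`(Y_i, φ_i)` the natural map `colimᵢ Hom(Y_i, A) → Hom(L, A)` is bijective. -/
theorem colim_hom_from_holim_bijective
    (Y : ℕ → C) [HasProduct Y] (φ : ∀ i : ℕ, Y (i + 1) ⟶ Y i)
    (L : C) (g : L ⟶ ∏ᶜ Y) (h : ∏ᶜ Y ⟶ L⟦(1 : ℤ)⟧)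
    (htri : Triangle.mk g
      (Limits.Pi.lift (fun i : ℕ => Limits.Pi.π Y i - Limits.Pi.π Y (i + 1) ≫ φ i)) h ∈
      (distTriang C))
    (A : C) (hA : Cocompact A) :
    (∀ f : L ⟶ A, ∃ (i : ℕ) (u : Y i ⟶ A), (g ≫ Limits.Pi.π Y i) ≫ u = f) ∧
    (∀ (i : ℕ) (u u' : Y i ⟶ A),
      (g ≫ Limits.Pi.π Y i) ≫ u = (g ≫ Limits.Pi.π Y i) ≫ u' →
      ∃ k : ℕ, towerTransition Y φ i k ≫ u = towerTransition Y φ i k ≫ u') := by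
  classical
  set d : (∏ᶜ Y : C) ⟶ ∏ᶜ Y :=
    Limits.Pi.lift (fun i : ℕ => Limits.Pi.π Y i - Limits.Pi.π Y (i + 1) ≫ φ i) with hd
  have hgd : g ≫ d = 0 := comp_distTriang_mor_zero₁₂ _ htri
  have hstep : ∀ i : ℕ, g ≫ Limits.Pi.π Y i = g ≫ (Limits.Pi.π Y (i + 1) ≫ φ i) := by
    intro i
    have h1 : g ≫ (d ≫ Limits.Pi.π Y i) = 0 := by rw [← assoc, hgd, zero_comp]
    rw [hd, limit.lift_π] at h1
    dsimp at h1
    rw [Preadditive.comp_sub] at h1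
    exact sub_eq_zero.mp h1
  have hstep' : ∀ (i k : ℕ) (u : Y i ⟶ A),
      (g ≫ Limits.Pi.π Y i) ≫ u
        = (g ≫ Limits.Pi.π Y (i + k)) ≫ (towerTransition Y φ i k ≫ u) := by
    intro i k
    induction k with
    | zero => intro u; simp [towerTransition]
    | succ k ih =>
      intro u
      rw [show towerTransition Y φ i (k + 1) = φ (i + k) ≫ towerTransition Y φ i k from rfl]
      rw [ih u, hstep (i + k)]
      simp only [assoc]
      rfl
  have hlift : ∀ {N M : ℕ}, N ≤ M → ∀ (u : Y N ⟶ A), ∃ u' : Y M ⟶ A,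
      (g ≫ Limits.Pi.π Y N) ≫ u = (g ≫ Limits.Pi.π Y M) ≫ u' := by
    intro N M hNM u
    obtain ⟨k, rfl⟩ := Nat.le.dest hNM
    exact ⟨towerTransition Y φ N k ≫ u, hstep' N k u⟩
  have hfactor : ∀ x : ⨁ i : ℕ, (Y i ⟶ A), ∃ (N : ℕ) (u : Y N ⟶ A),
      g ≫ PhiHom Y A x = (g ≫ Limits.Pi.π Y N) ≫ u := by
    intro x
    induction x using DirectSum.induction_on with
    | zero => exact ⟨0, 0, by simp⟩
    | of i u => exact ⟨i, u, by rw [PhiHom_of, assoc]⟩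
    | add x y hx hy =>
      obtain ⟨N₁, u₁, h₁⟩ := hx
      obtain ⟨N₂, u₂, h₂⟩ := hy
      obtain ⟨u₁', h₁'⟩ := hlift (le_max_left N₁ N₂) u₁
      obtain ⟨u₂', h₂'⟩ := hlift (le_max_right N₁ N₂) u₂
      refine ⟨max N₁ N₂, u₁' + u₂', ?_⟩
      rw [map_add, Preadditive.comp_add, h₁, h₂, h₁', h₂', Preadditive.comp_add]
  constructor
  · -- surjectivity
    intro f
    have hT' := inv_rot_of_distTriang _ htri
    have hT'' := inv_rot_of_distTriang _ hT'
    have h0 : (Triangle.invRotate ((Triangle.mk g d h).invRotate)).mor₁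
        ≫ ((Triangle.mk g d h).invRotate).mor₁ = 0 :=
      comp_distTriang_mor_zero₁₂ _ hT''
    -- describe mor₁ of the doubly inverse-rotated triangle
    have hz : ((Triangle.mk g d h).invRotate).mor₁ ≫ f = 0 := by
      have h1 : (Triangle.invRotate ((Triangle.mk g d h).invRotate)).mor₁
          ≫ (((Triangle.mk g d h).invRotate).mor₁ ≫ f) = 0 := by
        exact (Category.assoc _ _ _).symm.trans ((congrArg (· ≫ f) h0).trans zero_comp)
      have h2 : (Triangle.mk g d h).invRotate.invRotate.mor₁
          = -((shiftFunctor C (-1 : ℤ)).map d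
              ≫ (shiftFunctor C (-1 : ℤ)).map
                  ((shiftFunctorCompIsoId C (-1 : ℤ) (1 : ℤ) (by omega)).inv.app (∏ᶜ Y))
              ≫ (shiftFunctorCompIsoId C (1 : ℤ) (-1 : ℤ) (by omega)).hom.app
                  ((∏ᶜ Y : C)⟦(-1 : ℤ)⟧)) := by
        show -((shiftFunctor C (-1 : ℤ)).map (d ≫ (shiftFunctorCompIsoId C (-1 : ℤ) (1 : ℤ) (by omega)).inv.app (∏ᶜ Y))
            ≫ (shiftFunctorCompIsoId C (1 : ℤ) (-1 : ℤ) (by omega)).hom.app ((∏ᶜ Y : C)⟦(-1 : ℤ)⟧)) = _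
        rw [Functor.map_comp, assoc]
      rw [h2] at h1
      erw [Preadditive.neg_comp, neg_eq_zero, assoc, assoc] at h1
      -- transport along the product comparison isomorphism
      haveI hYs : HasProduct (fun i : ℕ => (Y i)⟦(-1 : ℤ)⟧) :=
        HasLimit.mk ⟨_, isLimitOfHasProductOfPreservesLimit (shiftFunctor C (-1 : ℤ)) Y⟩
      set pc := piComparison (shiftFunctor C (-1 : ℤ)) Y with hpc
      have hcomm : d⟦(-1 : ℤ)⟧' ≫ pc
          = pc ≫ Limits.Pi.lift (fun i : ℕ =>
              Limits.Pi.π (fun j : ℕ => (Y j)⟦(-1 : ℤ)⟧) i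
                - Limits.Pi.π (fun j : ℕ => (Y j)⟦(-1 : ℤ)⟧) (i + 1) ≫ (φ i)⟦(-1 : ℤ)⟧') := by
        apply limit.hom_ext
        rintro ⟨j⟩
        rw [assoc, assoc]
        erw [piComparison_comp_π, limit.lift_π]
        dsimp
        rw [Preadditive.comp_sub, ← Functor.map_comp, hd, limit.lift_π]
        dsimp
        rw [Functor.map_sub, Functor.map_comp]
        erw [piComparison_comp_π]
        rw [← assoc]
        erw [piComparison_comp_π]
      set w : (∏ᶜ Y : C)⟦(-1 : ℤ)⟧ ⟶ A :=
        (shiftFunctor C (-1 : ℤ)).map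
            ((shiftFunctorCompIsoId C (-1 : ℤ) (1 : ℤ) (by omega)).inv.app (∏ᶜ Y))
          ≫ (shiftFunctorCompIsoId C (1 : ℤ) (-1 : ℤ) (by omega)).hom.app
              ((∏ᶜ Y : C)⟦(-1 : ℤ)⟧)
          ≫ ((Triangle.mk g d h).invRotate.mor₁ ≫ f) with hw
      have h1' : d⟦(-1 : ℤ)⟧' ≫ w = 0 := by
        exact h1
      have hpcw : Limits.Pi.lift (fun i : ℕ =>
            Limits.Pi.π (fun j : ℕ => (Y j)⟦(-1 : ℤ)⟧) i
              - Limits.Pi.π (fun j : ℕ => (Y j)⟦(-1 : ℤ)⟧) (i + 1) ≫ (φ i)⟦(-1 : ℤ)⟧')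
          ≫ (inv pc ≫ w) = 0 := by
        rw [← cancel_epi pc, comp_zero, ← assoc, ← hcomm, assoc, IsIso.hom_inv_id_assoc]
        exact h1'
      have hw0 : inv pc ≫ w = 0 :=
        dMap_precomp_eq_zero hA (fun j : ℕ => (Y j)⟦(-1 : ℤ)⟧)
          (fun i => (φ i)⟦(-1 : ℤ)⟧') _ hpcw
      have hw1 : w = 0 := by
        rw [← IsIso.hom_inv_id_assoc pc w, hw0, comp_zero]
      rw [hw] at hw1
      have hw2 : (Triangle.mk g d h).invRotate.mor₁ ≫ f = 0 := by
        erw [← cancel_epi ((shiftFunctorCompIsoId C (1 : ℤ) (-1 : ℤ) (by omega)).hom.app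
              ((∏ᶜ Y : C)⟦(-1 : ℤ)⟧)),
          ← cancel_epi ((shiftFunctor C (-1 : ℤ)).map
              ((shiftFunctorCompIsoId C (-1 : ℤ) (1 : ℤ) (by omega)).inv.app (∏ᶜ Y))),
          comp_zero, comp_zero]
        exact hw1
      exact hw2
    obtain ⟨w, hwf⟩ := Triangle.yoneda_exact₂ _ hT' f hz
    -- (invRotate T).mor₂ = g
    have hmor₂ : ((Triangle.mk g d h).invRotate).mor₂ = g := rfl
    rw [hmor₂] at hwf
    obtain ⟨x, rfl⟩ := (cocompact_bij_nat hA Y).2 w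
    obtain ⟨N, u, hNu⟩ := hfactor x
    exact ⟨N, u, by rw [hwf, ← hNu]; rfl⟩
  · -- injectivity
    intro i u u' huu
    have hv0 : g ≫ (Limits.Pi.π Y i ≫ (u - u')) = 0 := by
      rw [← assoc, Preadditive.comp_sub, huu, sub_self]
    obtain ⟨w, hw⟩ := Triangle.yoneda_exact₂ _ htri (Limits.Pi.π Y i ≫ (u - u')) hv0
    have hmor₂ : (Triangle.mk g d h).mor₂ = d := rfl
    rw [hmor₂] at hw
    obtain ⟨x, rfl⟩ := (cocompact_bij_nat hA Y).2 w
    have hofD : DirectSum.of (fun j : ℕ => (Y j ⟶ A)) i (u - u') = Dshift Y φ A x := by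
      apply (cocompact_bij_nat hA Y).1
      rw [PhiHom_of, Phi_Dshift, ← hd]; exact hw
    have hDx : ∀ j, (Dshift Y φ A x) j
        = (DirectSum.of (fun j : ℕ => (Y j ⟶ A)) i (u - u')) j := by
      intro j; rw [← hofD]
    have hlow : ∀ j, j < i → x j = 0 := by
      intro j
      induction j with
      | zero =>
        intro hj
        have h2 := hDx 0
        rw [Dshift_apply_zero, DirectSum.of_eq_of_ne _ _ _ (by omega)] at h2
        exact h2
      | succ j ih =>
        intro hj
        have h2 := hDx (j + 1)
        rw [Dshift_apply_succ, DirectSum.of_eq_of_ne _ _ _ (by omega), ih (by omega),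
          comp_zero, sub_zero] at h2
        exact h2
    have hxi : x i = u - u' := by
      cases i with
      | zero =>
        have h2 := hDx 0
        rw [Dshift_apply_zero, DirectSum.of_eq_same] at h2
        exact h2
      | succ j =>
        have h2 := hDx (j + 1)
        rw [Dshift_apply_succ, DirectSum.of_eq_same, hlow j (by omega), comp_zero,
          sub_zero] at h2
        exact h2
    have htt : ∀ k : ℕ, towerTransition Y φ i k ≫ (u - u') = x (i + k) := by
      intro k
      induction k with
      | zero =>
        have e : towerTransition Y φ i 0 ≫ (u - u') = 𝟙 (Y i) ≫ (u - u') := rfl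
        rw [e, id_comp]
        exact hxi.symm
      | succ k ih =>
        have h2 := hDx (i + k + 1)
        rw [Dshift_apply_succ, DirectSum.of_eq_of_ne _ _ _ (by omega)] at h2
        rw [show towerTransition Y φ i (k + 1) = φ (i + k) ≫ towerTransition Y φ i k from rfl,
          Category.assoc (φ (i + k)) (towerTransition Y φ i k) (u - u'), ih]
        exact (sub_eq_zero.mp h2).symm
    obtain ⟨N, hN⟩ := exists_bound Y x
    refine ⟨N, ?_⟩
    have h3 := htt N
    rw [hN (i + N) (Nat.le_add_left N i)] at h3
    rw [Preadditive.comp_sub] at h3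
    exact sub_eq_zero.mp h3
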